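/- Let X be a topological space, C₊ := ℝ≥0 × X with the product topology, A ∈ ℂ with A ≠ 0, ν : C₊ → ℂ continuous with ν(0, x̂₀) ≠ 0 for some x̂₀ ∈ X, and let ψ = (ψₘ) be a component family with each ψₘ symmetric and continuous. If some ψₘ is nonzero at some argument all of whose frequencies are strictly positive, then for every N ∈ ℕ there exists n ≥ N and p : Fin n → C₊ with Fₙ[ψ](p) ≠ 0. (This is the paper's claim that every nonzero state in a Fock space with nonvanishing memory is necessarily supported on infinitely many BMS particles.) -/

import Mathlib

open scoped BigOperators

noncomputable section

/-- The space `C₊ = ℝ≥0 × X` of null momenta: a frequency `ω ∈ ℝ≥0` and an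
angular direction in `X`. -/
abbrev Cplus (X : Type*) := NNReal × X

/-- A component family is symmetric if each component `ψₘ` is invariant under
precomposition with permutations of `Fin m`. -/
def IsSymmFamily {X : Type*} (ψ : ∀ m : ℕ, (Fin m → Cplus X) → ℂ) : Prop :=
  ∀ (m : ℕ) (σ : Equiv.Perm (Fin m)) (p : Fin m → Cplus X), ψ m (p ∘ σ) = ψ m p

/-- The BMS-particle pairing
`Fₙ[ψ](p) = A · Σ_{m=0}^{n} (16π)^m √(n!/m!) (1/(n−m)!) (1/n!)
  Σ_{σ ∈ Perm(Fin n)} (Π_{i=1}^{m} ω(p_{σ(i)})) ψₘ(p_{σ(1)},…,p_{σ(m)})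
  Π_{i=m+1}^{n} ν(p_{σ(i)})`. -/
def pairing {X : Type*} (A : ℂ) (ν : Cplus X → ℂ)
    (ψ : ∀ m : ℕ, (Fin m → Cplus X) → ℂ) (n : ℕ) (p : Fin n → Cplus X) : ℂ :=
  A * ∑ m : Fin (n + 1),
    (((16 * Real.pi) ^ (m : ℕ) * Real.sqrt ((n.factorial : ℝ) / ((m : ℕ).factorial : ℝ))
        / ((n - (m : ℕ)).factorial : ℝ) / (n.factorial : ℝ) : ℝ) : ℂ) *
      ∑ σ : Equiv.Perm (Fin n),
        (∏ i : Fin n,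
          (if (i : ℕ) < (m : ℕ) then (((p (σ i)).1 : ℝ) : ℂ) else ν (p (σ i)))) *
        ψ (m : ℕ) (fun i : Fin (m : ℕ) => p (σ (Fin.castLE (Nat.lt_succ_iff.mp m.isLt) i)))

/-- **Infinitely many BMS particles**: for nonzero memory (`ν(0,x̂₀) ≠ 0` for
some direction `x̂₀`) and `A ≠ 0`, any component family which is nonzero at
some configuration of strictly positive frequencies has nonvanishing pairing
with BMS `n`-particle states for arbitrarily large `n`, i.e. the state is
supported on infinitely many BMS particles. -/

lemma filter_lt_card {n k : ℕ} (h : k ≤ n) :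
    (Finset.univ.filter (fun i : Fin n => (i:ℕ) < k)).card = k := by
  have : Finset.univ.filter (fun i : Fin n => (i:ℕ) < k)
      = Finset.univ.image (Fin.castLE h) := by
    ext i
    simp only [Finset.mem_filter, Finset.mem_univ, true_and, Finset.mem_image]
    constructor
    · intro hi; exact ⟨⟨i, hi⟩, rfl⟩
    · rintro ⟨j, rfl⟩; exact j.isLt
  rw [this, Finset.card_image_of_injective _ (Fin.castLE_injective h)]
  simp

lemma vanish_all {X : Type*} [TopologicalSpace X] {m : ℕ}
    {f : (Fin m → Cplus X) → ℂ} (hf : Continuous f)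
    (h : ∀ p : Fin m → Cplus X, (∀ i, 0 < (p i).1) → f p = 0) (q : Fin m → Cplus X) :
    f q = 0 := by
  set g : NNReal → ℂ := fun t => f (fun i => ((q i).1 + t, (q i).2)) with hg
  have hgc : Continuous g := by
    apply hf.comp
    apply continuous_pi
    intro i
    exact ((continuous_const.add continuous_id).prodMk continuous_const)
  have h1 : Filter.Tendsto g (nhdsWithin 0 (Set.Ioi 0)) (nhds (f q)) := by
    have h0 : g 0 = f q := by simp [hg]
    have := hgc.tendsto 0
    rw [h0] at this
    exact this.mono_left nhdsWithin_le_nhds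
  have h2 : Filter.Tendsto g (nhdsWithin 0 (Set.Ioi 0)) (nhds 0) := by
    apply Filter.Tendsto.congr' _ tendsto_const_nhds
    filter_upwards [self_mem_nhdsWithin] with t ht
    exact (h _ (fun i => lt_of_lt_of_le ht le_add_self)).symm
  exact tendsto_nhds_unique h1 h2

theorem bms_state_with_memory_has_infinitely_many_particles
    {X : Type*} [TopologicalSpace X] (A : ℂ) (hA : A ≠ 0)
    (ν : Cplus X → ℂ) (hν : Continuous ν)
    (x₀ : X) (hx₀ : ν (0, x₀) ≠ 0)
    (ψ : ∀ m : ℕ, (Fin m → Cplus X) → ℂ) (hsym : IsSymmFamily ψ)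
    (hcont : ∀ m, Continuous (ψ m))
    (hne : ∃ (m : ℕ) (p : Fin m → Cplus X), (∀ i, 0 < (p i).1) ∧ ψ m p ≠ 0) :
    ∀ N : ℕ, ∃ n, N ≤ n ∧ ∃ p : Fin n → Cplus X, pairing A ν ψ n p ≠ 0 := by
  classical
  intro N
  set m₀ := Nat.find hne with hm₀def
  obtain ⟨p₀, hp₀pos, hp₀ne⟩ := Nat.find_spec hne
  have hmin : ∀ m < m₀, ∀ q : Fin m → Cplus X, ψ m q = 0 := by
    intro m hm q
    have hnm := Nat.find_min hne hm
    push_neg at hnm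
    exact vanish_all (hcont m) hnm q
  refine ⟨max N m₀, le_max_left _ _, ?_⟩
  set n := max N m₀ with hndef
  have hmn : m₀ ≤ n := le_max_right _ _
  set p : Fin n → Cplus X :=
    fun i => if h : (i:ℕ) < m₀ then p₀ ⟨i, h⟩ else (0, x₀) with hpdef
  refine ⟨p, ?_⟩
  unfold pairing
  set M : Fin (n+1) := ⟨m₀, Nat.lt_succ_of_le hmn⟩ with hMdef
  set T : Fin (n+1) → ℂ := fun m =>
    (((16 * Real.pi) ^ (m : ℕ) * Real.sqrt ((n.factorial : ℝ) / ((m : ℕ).factorial : ℝ))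
        / ((n - (m : ℕ)).factorial : ℝ) / (n.factorial : ℝ) : ℝ) : ℂ) *
      ∑ σ : Equiv.Perm (Fin n),
        (∏ i : Fin n,
          (if (i : ℕ) < (m : ℕ) then (((p (σ i)).1 : ℝ) : ℂ) else ν (p (σ i)))) *
        ψ (m : ℕ) (fun i : Fin (m : ℕ) => p (σ (Fin.castLE (Nat.lt_succ_iff.mp m.isLt) i)))
    with hTdef
  have hsum : ∑ m : Fin (n+1), T m = T M := by
    apply Finset.sum_eq_single_of_mem M (Finset.mem_univ _)
    intro m _ hmM
    have hmne : (m : ℕ) ≠ m₀ := fun h => hmM (Fin.ext h)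
    rcases lt_or_gt_of_ne hmne with hlt | hgt
    · have hz : ∀ σ : Equiv.Perm (Fin n),
          (∏ i : Fin n,
            (if (i : ℕ) < (m : ℕ) then (((p (σ i)).1 : ℝ) : ℂ) else ν (p (σ i)))) *
          ψ (m : ℕ) (fun i : Fin (m : ℕ) =>
            p (σ (Fin.castLE (Nat.lt_succ_iff.mp m.isLt) i))) = 0 := by
        intro σ
        rw [hmin (m : ℕ) hlt, mul_zero]
      rw [hTdef]
      simp only []
      rw [Finset.sum_congr rfl (fun σ _ => hz σ), Finset.sum_const_zero, mul_zero]
    · have hzero : ∀ σ : Equiv.Perm (Fin n),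
          (∏ i : Fin n,
            (if (i : ℕ) < (m : ℕ) then (((p (σ i)).1 : ℝ) : ℂ) else ν (p (σ i)))) = 0 := by
        intro σ
        by_cases hall : ∀ i : Fin n, (i:ℕ) < (m:ℕ) → ((σ i : ℕ) < m₀)
        · exfalso
          have hcard : (Finset.univ.filter (fun i : Fin n => (i:ℕ) < (m:ℕ))).card
              ≤ (Finset.univ.filter (fun i : Fin n => (i:ℕ) < m₀)).card := by
            apply Finset.card_le_card_of_injOn σ
            · intro i hi
              simp only [Finset.mem_coe, Finset.mem_filter, Finset.mem_univ, true_and] at hi ⊢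
              exact hall i hi
            · exact fun a _ b _ hab => σ.injective hab
          rw [filter_lt_card (Nat.lt_succ_iff.mp m.isLt), filter_lt_card hmn] at hcard
          omega
        · push_neg at hall
          obtain ⟨i, hi, hσi⟩ := hall
          apply Finset.prod_eq_zero (Finset.mem_univ i)
          rw [if_pos hi]
          have : p (σ i) = (0, x₀) := by
            rw [hpdef]; exact dif_neg (not_lt.mpr hσi)
          rw [this]
          norm_num
      rw [hTdef]
      simp only []
      rw [Finset.sum_congr rfl (fun σ _ => by rw [hzero σ, zero_mul]),
        Finset.sum_const_zero, mul_zero]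
  rw [hsum]
  set Good : Equiv.Perm (Fin n) → Prop :=
    fun σ => ∀ i : Fin n, (i:ℕ) < m₀ → ((σ i : ℕ) < m₀) with hGooddef
  set k : ℕ := (Finset.univ.filter (fun i : Fin n => ¬ (i:ℕ) < m₀)).card with hkdef
  set W : ℂ := (∏ j ∈ Finset.univ.filter (fun i : Fin n => (i:ℕ) < m₀),
      (((p j).1 : ℝ) : ℂ)) * (ν (0, x₀) ^ k * ψ m₀ p₀) with hWdef
  have hterm : ∀ σ : Equiv.Perm (Fin n),
      (∏ i : Fin n,
        (if (i : ℕ) < m₀ then (((p (σ i)).1 : ℝ) : ℂ) else ν (p (σ i)))) *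
      ψ m₀ (fun i : Fin m₀ => p (σ (Fin.castLE hmn i))) =
      if Good σ then W else 0 := by
    intro σ
    by_cases hg : Good σ
    · rw [if_pos hg]
      have hgood : ∀ j : Fin m₀, (σ (Fin.castLE hmn j) : ℕ) < m₀ :=
        fun j => hg _ (by simp)
      set τ₀ : Fin m₀ → Fin m₀ :=
        fun j => ⟨(σ (Fin.castLE hmn j) : ℕ), hgood j⟩ with hτ₀def
      have hτinj : Function.Injective τ₀ := by
        intro a b hab
        rw [hτ₀def] at hab
        simp only [Fin.mk.injEq] at hab
        exact Fin.castLE_injective hmn (σ.injective (Fin.ext hab))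
      have hτbij : Function.Bijective τ₀ := Finite.injective_iff_bijective.mp hτinj
      set τ : Equiv.Perm (Fin m₀) := Equiv.ofBijective τ₀ hτbij with hτdef
      have hτapp : ∀ j : Fin m₀, τ j = τ₀ j := fun j => rfl
      -- image fact : σ maps the positive block onto itself
      have hsub : (Finset.univ.filter (fun j : Fin n => (j:ℕ) < m₀)).image σ ⊆
          Finset.univ.filter (fun j : Fin n => (j:ℕ) < m₀) := by
        intro a ha
        obtain ⟨b, hb, rfl⟩ := Finset.mem_image.mp ha
        simp only [Finset.mem_filter, Finset.mem_univ, true_and] at hb ⊢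
        exact hg b hb
      have hcard : (Finset.univ.filter (fun j : Fin n => (j:ℕ) < m₀)).card ≤
          ((Finset.univ.filter (fun j : Fin n => (j:ℕ) < m₀)).image σ).card := by
        rw [Finset.card_image_of_injective _ σ.injective]
      have heq : (Finset.univ.filter (fun j : Fin n => (j:ℕ) < m₀)).image σ =
          Finset.univ.filter (fun j : Fin n => (j:ℕ) < m₀) :=
        Finset.eq_of_subset_of_card_le hsub hcard
      have himg : ∀ i : Fin n, ¬ ((i:ℕ) < m₀) → ¬ ((σ i : ℕ) < m₀) := by
        intro i hi hσi
        have hσiS : σ i ∈ Finset.univ.filter (fun j : Fin n => (j:ℕ) < m₀) := by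
          simp only [Finset.mem_filter, Finset.mem_univ, true_and]
          exact hσi
        rw [← heq] at hσiS
        obtain ⟨b, hb, hbe⟩ := Finset.mem_image.mp hσiS
        have : b = i := σ.injective hbe
        subst this
        simp only [Finset.mem_filter, Finset.mem_univ, true_and] at hb
        exact hi hb
      -- the ψ factor
      have hψeq : ψ m₀ (fun i : Fin m₀ => p (σ (Fin.castLE hmn i))) = ψ m₀ p₀ := by
        have hfun : (fun i : Fin m₀ => p (σ (Fin.castLE hmn i))) = p₀ ∘ τ := by
          funext i
          have : p (σ (Fin.castLE hmn i)) = p₀ ⟨(σ (Fin.castLE hmn i) : ℕ), hgood i⟩ := by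
            rw [hpdef]; exact dif_pos (hgood i)
          rw [this]
          rfl
        rw [hfun, hsym m₀ τ p₀]
      -- the product
      have hprod : (∏ i : Fin n,
          (if (i : ℕ) < m₀ then (((p (σ i)).1 : ℝ) : ℂ) else ν (p (σ i)))) =
          (∏ j ∈ Finset.univ.filter (fun i : Fin n => (i:ℕ) < m₀),
            (((p j).1 : ℝ) : ℂ)) * ν (0, x₀) ^ k := by
        rw [Finset.prod_ite]
        congr 1
        · -- ω part
          conv_rhs => rw [← heq]
          rw [Finset.prod_image (fun a _ b _ hab => σ.injective hab)]
        · -- ν part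
          rw [hkdef]
          rw [Finset.prod_congr rfl (fun i hi => ?_), Finset.prod_const]
          have hi' : ¬ ((i:ℕ) < m₀) := (Finset.mem_filter.mp hi).2
          have : p (σ i) = (0, x₀) := by
            rw [hpdef]; exact dif_neg (himg i hi')
          rw [this]
      rw [hprod, hψeq, hWdef]
      ring
    · rw [if_neg hg]
      simp only [hGooddef, not_forall, Classical.not_imp, not_lt] at hg
      obtain ⟨i, hi, hσi⟩ := hg
      have hprod : (∏ i : Fin n,
          (if (i : ℕ) < m₀ then (((p (σ i)).1 : ℝ) : ℂ) else ν (p (σ i)))) = 0 := by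
        apply Finset.prod_eq_zero (Finset.mem_univ i)
        rw [if_pos hi]
        have : p (σ i) = (0, x₀) := by
          rw [hpdef]; exact dif_neg (not_lt.mpr hσi)
        rw [this]; norm_num
      rw [hprod, zero_mul]
  -- rewrite T M
  have hTM : T M = (((16 * Real.pi) ^ m₀ *
      Real.sqrt ((n.factorial : ℝ) / (m₀.factorial : ℝ))
      / ((n - m₀).factorial : ℝ) / (n.factorial : ℝ) : ℝ) : ℂ) *
      ∑ σ : Equiv.Perm (Fin n),
        (∏ i : Fin n,
          (if (i : ℕ) < m₀ then (((p (σ i)).1 : ℝ) : ℂ) else ν (p (σ i)))) *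
        ψ m₀ (fun i : Fin m₀ => p (σ (Fin.castLE hmn i))) := rfl
  rw [hTM, Finset.sum_congr rfl (fun σ _ => hterm σ)]
  rw [← Finset.sum_filter, Finset.sum_const]
  -- nonvanishing
  have hcardpos : 0 < (Finset.univ.filter Good).card := by
    apply Finset.card_pos.mpr
    refine ⟨1, ?_⟩
    simp only [Finset.mem_filter, Finset.mem_univ, true_and, hGooddef]
    intro i hi
    simpa using hi
  have hcoef : ((16 * Real.pi) ^ m₀ *
      Real.sqrt ((n.factorial : ℝ) / (m₀.factorial : ℝ))
      / ((n - m₀).factorial : ℝ) / (n.factorial : ℝ) : ℝ) ≠ 0 := by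
    have h1 : (0:ℝ) < (n.factorial : ℝ) := by exact_mod_cast n.factorial_pos
    have h2 : (0:ℝ) < (m₀.factorial : ℝ) := by exact_mod_cast m₀.factorial_pos
    have h3 : (0:ℝ) < ((n - m₀).factorial : ℝ) := by
      exact_mod_cast (n - m₀).factorial_pos
    have h4 : (0:ℝ) < Real.sqrt ((n.factorial : ℝ) / (m₀.factorial : ℝ)) :=
      Real.sqrt_pos.mpr (div_pos h1 h2)
    have h5 : (0:ℝ) < (16 * Real.pi) ^ m₀ := by positivity
    positivity
  have hWne : W ≠ 0 := by
    rw [hWdef]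
    apply mul_ne_zero
    · apply Finset.prod_ne_zero_iff.mpr
      intro j hj
      have hj' : (j:ℕ) < m₀ := (Finset.mem_filter.mp hj).2
      have : p j = p₀ ⟨(j:ℕ), hj'⟩ := by rw [hpdef]; exact dif_pos hj'
      rw [this]
      simp only [ne_eq, Complex.ofReal_eq_zero, NNReal.coe_eq_zero]
      exact (hp₀pos _).ne'
    · exact mul_ne_zero (pow_ne_zero _ hx₀) hp₀ne
  apply mul_ne_zero hA
  apply mul_ne_zero
  · exact Complex.ofReal_ne_zero.mpr hcoef
  · rw [nsmul_eq_mul]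
    exact mul_ne_zero (Nat.cast_ne_zero.mpr hcardpos.ne') hWne

end
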